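/- The nullity of the p-th Dirac operator equals Σ_{i=0}^p β_i if and only if d_{p+1} is injective, where β_i = dim H_i(C_•); in general η(D_p) ≥ Σ_{i=0}^p β_i. -/

import Mathlib

open LinearMap

variable {𝕜 : Type} [RCLike 𝕜] {C : ℕ → Type}
  [∀ n, NormedAddCommGroup (C n)] [∀ n, InnerProductSpace 𝕜 (C n)]
  [∀ n, FiniteDimensional 𝕜 (C n)]

/-- The "up" part of the Dirac operator: superdiagonal blocks `B_{i+1}` (the boundary
maps `d_{i+1}`). -/
noncomputable def diracUp (d : ∀ n : ℕ, C n →ₗ[𝕜] C (n - 1)) (p : ℕ) :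
    (∀ i : Fin (p + 2), C i) →ₗ[𝕜] ∀ i : Fin (p + 2), C i :=
  LinearMap.pi fun j =>
    if h : (j : ℕ) + 1 < p + 2 then
      ((d ((j : ℕ) + 1)).comp (LinearMap.proj (⟨(j : ℕ) + 1, h⟩ : Fin (p + 2)))
        : (∀ i : Fin (p + 2), C i) →ₗ[𝕜] C (j : ℕ))
    else 0

/-- The "down" part of the Dirac operator: subdiagonal blocks `B_i^*` (adjoints of the
boundary maps). -/
noncomputable def diracDown (d : ∀ n : ℕ, C n →ₗ[𝕜] C (n - 1)) (p : ℕ) :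
    (∀ i : Fin (p + 2), C i) →ₗ[𝕜] ∀ i : Fin (p + 2), C i :=
  LinearMap.pi fun j =>
    if h : 0 < (j : ℕ) then
      ((adjoint (d (j : ℕ))).comp
          (LinearMap.proj (⟨(j : ℕ) - 1, lt_of_le_of_lt (Nat.sub_le _ _) j.isLt⟩ : Fin (p + 2)))
        : (∀ i : Fin (p + 2), C i) →ₗ[𝕜] C (j : ℕ))
    else 0

/-- The `p`-th Dirac operator: the block tridiagonal operator on
`C 0 ⊕ C 1 ⊕ ⋯ ⊕ C (p+1)` with superdiagonal blocks the boundary maps, subdiagonal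
blocks their adjoints, and zero diagonal blocks. -/
noncomputable def dirac (d : ∀ n : ℕ, C n →ₗ[𝕜] C (n - 1)) (p : ℕ) :
    (∀ i : Fin (p + 2), C i) →ₗ[𝕜] ∀ i : Fin (p + 2), C i :=
  diracUp d p + diracDown d p

/-- The `p`-th (Hodge) Laplacian `Δ_p = d_{p+1} ∘ d_{p+1}^* + d_p^* ∘ d_p`. -/
noncomputable def laplacian (d : ∀ n : ℕ, C n →ₗ[𝕜] C (n - 1)) (p : ℕ) :
    C p →ₗ[𝕜] C p :=
  (d (p + 1) ∘ₗ adjoint (d (p + 1)) : C p →ₗ[𝕜] C p) + adjoint (d p) ∘ₗ d p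

/-- The `p`-th down Laplacian `Δ_p^Down = d_p^* ∘ d_p`. -/
noncomputable def laplacianDown (d : ∀ n : ℕ, C n →ₗ[𝕜] C (n - 1)) (p : ℕ) :
    C p →ₗ[𝕜] C p :=
  adjoint (d p) ∘ₗ d p


lemma dirac_apply (d : ∀ n : ℕ, C n →ₗ[𝕜] C (n - 1)) (p : ℕ)
    (x : ∀ i : Fin (p + 2), C i) (j : Fin (p + 2)) :
    dirac d p x j =
      HAdd.hAdd (α := C (j : ℕ)) (β := C (j : ℕ)) (γ := C (j : ℕ))
      (if h : (j : ℕ) + 1 < p + 2 then (show C (j : ℕ) from d ((j : ℕ) + 1) (x ⟨(j : ℕ) + 1, h⟩))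
        else 0)
      (if h : 0 < (j : ℕ) then
        adjoint (d (j : ℕ))
          (x ⟨(j : ℕ) - 1, lt_of_le_of_lt (Nat.sub_le _ _) j.isLt⟩) else 0) := by
  simp only [dirac, diracUp, diracDown, LinearMap.add_apply, Pi.add_apply, LinearMap.pi_apply]
  congr 1 <;> split <;> simp

/-- The family of submodules whose product is the kernel of the Dirac operator. -/
noncomputable def Ksub (d : ∀ n : ℕ, C n →ₗ[𝕜] C (n - 1)) (p : ℕ) (i : Fin (p + 2)) :
    Submodule 𝕜 (C i) :=
  ker (d i) ⊓ (if (i : ℕ) < p + 1 then ker (adjoint (d ((i : ℕ) + 1))) else ⊤)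

lemma ker_dirac_eq (d : ∀ n : ℕ, C n →ₗ[𝕜] C (n - 1))
    (hd0 : d 0 = 0) (hd : ∀ n : ℕ, (d n).comp (d (n + 1)) = 0) (p : ℕ) :
    ker (dirac d p) = Submodule.pi Set.univ (Ksub d p) := by
  have adj0 : ∀ {E F : Type} [NormedAddCommGroup E] [InnerProductSpace 𝕜 E]
      [FiniteDimensional 𝕜 E] [NormedAddCommGroup F] [InnerProductSpace 𝕜 F]
      [FiniteDimensional 𝕜 F] (f : E →ₗ[𝕜] F) (y : F), f (adjoint f y) = 0 → adjoint f y = 0 := by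
    intro E F _ _ _ _ _ _ f y h
    have : inner 𝕜 (adjoint f y) (adjoint f y) = 0 := by
      rw [LinearMap.adjoint_inner_left, h, inner_zero_right]
    exact inner_self_eq_zero.mp this
  ext x
  simp only [LinearMap.mem_ker, Submodule.mem_pi, Set.mem_univ, forall_true_left]
  constructor
  · intro hx
    have hE : ∀ j : Fin (p + 2),
        HAdd.hAdd (α := C (j : ℕ)) (β := C (j : ℕ)) (γ := C (j : ℕ))
        (if h : (j : ℕ) + 1 < p + 2 then (show C (j : ℕ) from d ((j : ℕ) + 1) (x ⟨(j : ℕ) + 1, h⟩))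
          else 0)
        (if h : 0 < (j : ℕ) then
          adjoint (d (j : ℕ))
            (x ⟨(j : ℕ) - 1, lt_of_le_of_lt (Nat.sub_le _ _) j.isLt⟩) else 0) = 0 := by
      intro j
      rw [← dirac_apply, hx, Pi.zero_apply]
    have hdown : ∀ j : Fin (p + 2), (h0 : 0 < (j : ℕ)) →
        adjoint (d (j : ℕ))
          (x ⟨(j : ℕ) - 1, lt_of_le_of_lt (Nat.sub_le _ _) j.isLt⟩) = 0 := by
      intro j h0
      apply adj0
      have heq := hE j
      rw [dif_pos h0] at heq
      have heq2 := congrArg (d (j : ℕ)) heq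
      rw [map_add, map_zero] at heq2
      have hA : d (j : ℕ)
          (if h : (j : ℕ) + 1 < p + 2 then (show C (j : ℕ) from d ((j : ℕ) + 1) (x ⟨(j : ℕ) + 1, h⟩))
            else 0) = 0 := by
        split
        · next h => simpa using congrFun (congrArg DFunLike.coe (hd (j : ℕ))) (x ⟨(j : ℕ) + 1, h⟩)
        · simp
      rw [hA, zero_add] at heq2
      exact heq2
    have hup : ∀ j : Fin (p + 2), (h : (j : ℕ) + 1 < p + 2) →
        d ((j : ℕ) + 1) (x ⟨(j : ℕ) + 1, h⟩) = 0 := by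
      intro j h
      have heq := hE j
      rw [dif_pos h] at heq
      rcases Nat.eq_zero_or_pos (j : ℕ) with h0 | h0
      · rw [dif_neg (by omega)] at heq
        simpa using heq
      · rw [dif_pos h0, hdown j h0, add_zero] at heq
        exact heq
    intro i
    simp only [Ksub, Submodule.mem_inf]
    constructor
    · rw [LinearMap.mem_ker]
      obtain ⟨iv, hiv⟩ := i
      cases iv with
      | zero => rw [hd0]; rfl
      | succ k => exact hup ⟨k, by omega⟩ (by simpa using hiv)
    · split
      · next hlt =>
        have := hdown ⟨(i : ℕ) + 1, by omega⟩ (by simp)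
        simpa [LinearMap.mem_ker] using this
      · trivial
  · intro hx
    funext j
    rw [dirac_apply]
    have hA : (if h : (j : ℕ) + 1 < p + 2 then (show C (j : ℕ) from d ((j : ℕ) + 1) (x ⟨(j : ℕ) + 1, h⟩))
        else 0) = 0 := by
      split
      · next h =>
        have hm := hx ⟨(j : ℕ) + 1, h⟩
        simp only [Ksub, Submodule.mem_inf] at hm
        simpa [LinearMap.mem_ker] using hm.1
      · rfl
    have hB : (if h : 0 < (j : ℕ) then
        adjoint (d (j : ℕ))
          (x ⟨(j : ℕ) - 1, lt_of_le_of_lt (Nat.sub_le _ _) j.isLt⟩) else 0) = 0 := by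
      split
      · next h0 =>
        obtain ⟨jv, hjv⟩ := j
        cases jv with
        | zero => exact absurd h0 (by simp)
        | succ k =>
          have hm := hx ⟨k, by omega⟩
          simp only [Ksub, Submodule.mem_inf] at hm
          have hm2 := hm.2
          split at hm2
          · exact hm2
          · next hc => exact absurd (by omega : (((⟨k, by omega⟩ : Fin (p + 2)) : ℕ)) < p + 1) hc
      · rfl
    rw [hA, hB, add_zero]
    rfl

section MoreAux

variable {E F : Type} [NormedAddCommGroup E] [InnerProductSpace 𝕜 E] [FiniteDimensional 𝕜 E]
  [NormedAddCommGroup F] [InnerProductSpace 𝕜 F] [FiniteDimensional 𝕜 F]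

lemma aux_ker_adjoint (f : E →ₗ[𝕜] F) : ker (adjoint f) = (range f)ᗮ := by
  ext x
  simp only [LinearMap.mem_ker, Submodule.mem_orthogonal]
  constructor
  · rintro h u ⟨y, rfl⟩
    have : inner 𝕜 x (f y) = 0 := by rw [← LinearMap.adjoint_inner_left, h, inner_zero_left]
    exact inner_eq_zero_symm.mp this
  · intro h
    have : inner 𝕜 (adjoint f x) (adjoint f x) = 0 := by
      rw [LinearMap.adjoint_inner_left]
      exact inner_eq_zero_symm.mp (h _ ⟨_, rfl⟩)
    exact inner_self_eq_zero.mp this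

lemma aux_hodge (W U : Submodule 𝕜 E) (h : U ≤ W) :
    Module.finrank 𝕜 (↥W ⧸ U.comap W.subtype) = Module.finrank 𝕜 ↥(W ⊓ Uᗮ) := by
  have h1 := Submodule.finrank_quotient_add_finrank (U.comap W.subtype)
  have h2 := (Submodule.comapSubtypeEquivOfLe h).finrank_eq
  have h3 := Submodule.finrank_add_inf_finrank_orthogonal h
  rw [inf_comm] at h3
  omega

end MoreAux

/-- pi of submodules is equivalent to the product of the submodules -/
noncomputable def piSubmoduleEquiv {ι : Type} [Fintype ι] {φ : ι → Type}
    [∀ i, AddCommGroup (φ i)] [∀ i, Module 𝕜 (φ i)] (K : ∀ i, Submodule 𝕜 (φ i)) :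
    ↥(Submodule.pi Set.univ K) ≃ₗ[𝕜] ∀ i, ↥(K i) where
  toFun x i := ⟨x.1 i, x.2 i (Set.mem_univ i)⟩
  invFun v := ⟨fun i => v i, fun i _ => (v i).2⟩
  map_add' := by intros; rfl
  map_smul' := by intros; rfl
  left_inv := fun x => rfl
  right_inv := fun v => rfl

lemma aux_beta (d : ∀ n : ℕ, C n →ₗ[𝕜] C (n - 1))
    (hd : ∀ n : ℕ, (d n).comp (d (n + 1)) = 0) (i : ℕ) :
    Module.finrank 𝕜 ↥(ker (d i) ⊓ ker (adjoint (d (i + 1)))) =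
      Module.finrank 𝕜
        (↥(LinearMap.ker (d i)) ⧸
          ((LinearMap.range (d (i + 1)) : Submodule 𝕜 (C i)).comap
            (LinearMap.ker (d i)).subtype)) := by
  have e1 : ker (adjoint (d (i + 1))) = (range (d (i + 1)))ᗮ := aux_ker_adjoint (d (i + 1))
  have e2 := congrArg
    (fun S : Submodule 𝕜 (C i) => Module.finrank 𝕜 ↥(ker (d i) ⊓ S)) e1
  exact e2.trans (aux_hodge _ _ (LinearMap.range_le_ker_iff.mpr (hd i))).symm

/-- The nullity of the `p`-th Dirac operator equals
`∑_{i=0}^p β_i` (with `β_i = dim H_i = dim (ker d_i / Im d_{i+1})`) if and only if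
`d_{p+1}` is injective; in general `η(D_p) ≥ ∑_{i=0}^p β_i`. -/
theorem statement11 (d : ∀ n : ℕ, C n →ₗ[𝕜] C (n - 1))
    (hd0 : d 0 = 0)
    (hd : ∀ n : ℕ, (d n).comp (d (n + 1)) = 0) (p : ℕ) :
    (Module.finrank 𝕜 ↥(LinearMap.ker (dirac d p)) =
        ∑ i ∈ Finset.range (p + 1),
          Module.finrank 𝕜
            (↥(LinearMap.ker (d i)) ⧸
              ((LinearMap.range (d (i + 1)) : Submodule 𝕜 (C i)).comap
                (LinearMap.ker (d i)).subtype))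
      ↔ Function.Injective (d (p + 1))) ∧
    (∑ i ∈ Finset.range (p + 1),
        Module.finrank 𝕜
          (↥(LinearMap.ker (d i)) ⧸
            ((LinearMap.range (d (i + 1)) : Submodule 𝕜 (C i)).comap
              (LinearMap.ker (d i)).subtype))
      ≤ Module.finrank 𝕜 ↥(LinearMap.ker (dirac d p))) := by
  classical
  have hcast : ∀ i : Fin (p + 1),
      Module.finrank 𝕜 ↥(Ksub d p i.castSucc) =
        Module.finrank 𝕜
          (↥(LinearMap.ker (d (i : ℕ))) ⧸
            ((LinearMap.range (d ((i : ℕ) + 1)) : Submodule 𝕜 (C (i : ℕ))).comap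
              (LinearMap.ker (d (i : ℕ))).subtype)) := by
    intro i
    have hlt : ((i.castSucc : Fin (p + 2)) : ℕ) < p + 1 := by
      simp [Fin.coe_castSucc, i.isLt]
    simp only [Ksub, Fin.coe_castSucc]
    exact (congrArg (fun S : Submodule 𝕜 (C (i : ℕ)) => Module.finrank 𝕜 ↥(ker (d (i : ℕ)) ⊓ S))
      (if_pos i.isLt)).trans (aux_beta d hd (i : ℕ))
  have hlast : Module.finrank 𝕜 ↥(Ksub d p (Fin.last (p + 1))) =
      Module.finrank 𝕜 ↥(LinearMap.ker (d (p + 1))) := by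
    simp only [Ksub, Fin.val_last]
    exact congrArg (fun S : Submodule 𝕜 (C (p + 1)) => Module.finrank 𝕜 ↥S)
      ((congrArg (ker (d (p + 1)) ⊓ ·) (if_neg (lt_irrefl _))).trans (inf_top_eq _))
  have hsum : Module.finrank 𝕜 ↥(LinearMap.ker (dirac d p)) =
      (∑ i ∈ Finset.range (p + 1),
        Module.finrank 𝕜
          (↥(LinearMap.ker (d i)) ⧸
            ((LinearMap.range (d (i + 1)) : Submodule 𝕜 (C i)).comap
              (LinearMap.ker (d i)).subtype)))
      + Module.finrank 𝕜 ↥(LinearMap.ker (d (p + 1))) := by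
    rw [ker_dirac_eq d hd0 hd p, (piSubmoduleEquiv (Ksub d p)).finrank_eq,
      Module.finrank_pi_fintype 𝕜, Fin.sum_univ_castSucc]
    rw [hlast]
    congr 1
    rw [← Fin.sum_univ_eq_sum_range (fun i : ℕ =>
      Module.finrank 𝕜
        (↥(LinearMap.ker (d i)) ⧸
          ((LinearMap.range (d (i + 1)) : Submodule 𝕜 (C i)).comap
            (LinearMap.ker (d i)).subtype))) (p + 1)]
    exact Finset.sum_congr rfl fun i _ => hcast i
  refine ⟨?_, by rw [hsum]; exact Nat.le_add_right _ _⟩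
  rw [hsum]
  constructor
  · intro h
    have h0 : Module.finrank 𝕜 ↥(LinearMap.ker (d (p + 1))) = 0 := by omega
    rw [← LinearMap.ker_eq_bot]
    exact Submodule.finrank_eq_zero.mp h0
  · intro h
    rw [LinearMap.ker_eq_bot.mpr h, finrank_bot]
    omega
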